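/- Let X, Y be compact Hausdorff spaces, E, F Banach spaces over 𝕂 ∈ {ℝ, ℂ} with F strictly convex, and A, B 𝕂-linear subspaces of C(X,E) and C(Y,F), respectively, such that Ch(A) ⊆ Θ(A). Then for any surjective (not necessarily linear) isometry T : A → B there exist a subset Z of Y, a continuous surjection φ : Z → Ch(A), and a family {V_y}_{y∈Z} of real-linear operators from E to F with ‖V_y‖ = 1 for all y ∈ Z, such that Tf(y) = T0(y) + V_y(f(φ(y))) for all f ∈ A and all y ∈ Z. -/

import Mathlib

open Set Metric

variable {𝕂 : Type*} [RCLike 𝕂]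
variable {X : Type*} [TopologicalSpace X] [CompactSpace X] [T2Space X]
variable {Y : Type*} [TopologicalSpace Y] [CompactSpace Y] [T2Space Y]
variable {E : Type*} [NormedAddCommGroup E] [NormedSpace ℝ E] [NormedSpace 𝕂 E]
  [IsScalarTower ℝ 𝕂 E] [CompleteSpace E]
variable {F : Type*} [NormedAddCommGroup F] [NormedSpace ℝ F] [NormedSpace 𝕂 F]
  [IsScalarTower ℝ 𝕂 F] [CompleteSpace F]

/-- The set `Θ(A)` of strong boundary points of a set `A` of functions in `C(X,E)`. -/
def strongBoundaryPoints {Z M : Type*} [TopologicalSpace Z] [CompactSpace Z]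
    [NormedAddCommGroup M] (A : Set C(Z, M)) : Set Z :=
  {x | ∀ U ∈ nhds x, ∀ ε : ℝ, 0 < ε → ∀ u : M, ‖u‖ = 1 →
    ∃ f ∈ A, ‖f‖ = 1 ∧ f x = u ∧ ∀ y, y ∉ U → ‖f y‖ < ε}

/-- The Choquet boundary of a subspace `A` of `C(X,E)`: points `x` for which there
is an extreme point `ν` of the closed unit ball of `E*` such that the functional
`f ↦ ν (f x)` on `A` is an extreme point of the closed unit ball of `A*`. -/
def choquetBoundary (A : Subspace 𝕂 C(X, E)) : Set X :=
  {x | ∃ ν : StrongDual 𝕂 E,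
    ν ∈ Set.extremePoints ℝ (closedBall (0 : StrongDual 𝕂 E) 1) ∧
    ∃ φ : StrongDual 𝕂 ↥A,
      φ ∈ Set.extremePoints ℝ (closedBall (0 : StrongDual 𝕂 ↥A) 1) ∧
      ∀ f : ↥A, φ f = ν ((f : C(X, E)) x)}

/-- Auxiliary: a continuous function on a nonempty compact space attains its norm. -/
lemma aux_cm_exists_norm_eq {Y F : Type*} [TopologicalSpace Y] [CompactSpace Y] [Nonempty Y]
    [NormedAddCommGroup F] (h : C(Y, F)) : ∃ y, ‖h y‖ = ‖h‖ := by
  obtain ⟨y, hy⟩ := h.continuous.norm.exists_forall_ge (by simp [Filter.cocompact_eq_bot])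
  exact ⟨y, le_antisymm (h.norm_coe_le_norm y) ((h.norm_le (norm_nonneg _)).mpr hy)⟩

/-- Auxiliary: in a strictly convex space, if the midpoint of two vectors of the closed
unit ball lies on the unit sphere, the two vectors coincide and are unit vectors. -/
lemma aux_midpt {F : Type*} [NormedAddCommGroup F] [NormedSpace ℝ F] [StrictConvexSpace ℝ F]
    {u v : F} (hu : ‖u‖ ≤ 1) (hv : ‖v‖ ≤ 1) (h : ‖(1/2 : ℝ) • (u + v)‖ = 1) :
    u = v ∧ ‖u‖ = 1 := by
  have heq : u = v := by
    by_contra hne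
    have hlt := norm_combo_lt_of_ne hu hv hne (by norm_num : (0:ℝ) < 1/2)
      (by norm_num : (0:ℝ) < 1/2) (by norm_num)
    rw [← smul_add, h] at hlt
    exact lt_irrefl _ hlt
  subst heq
  refine ⟨rfl, ?_⟩
  have hmid : (1/2 : ℝ) • (u + u) = u := by
    rw [← two_smul ℝ u, smul_smul]; norm_num
  rwa [hmid] at h

/-- Auxiliary: `a ≤ 1` if `a ≤ 1 + δ` for all positive `δ`. -/
lemma aux_le_one {a : ℝ} (h : ∀ δ : ℝ, 0 < δ → a ≤ 1 + δ) : a ≤ 1 :=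
  le_of_forall_gt_imp_ge_of_dense fun c hc => le_trans (h (c - 1) (by linarith)) (by linarith)

/-- Auxiliary: a norm-one operator almost attains its norm at a unit vector. -/
lemma aux_exists_unit_big {E F : Type*} [NormedAddCommGroup E] [NormedSpace ℝ E]
    [NormedAddCommGroup F] [NormedSpace ℝ F] (V : E →L[ℝ] F) (hV : ‖V‖ = 1) :
    ∃ u : E, ‖u‖ = 1 ∧ 1/2 < ‖V u‖ := by
  obtain ⟨z, hz1, hz2⟩ := V.exists_lt_apply_of_lt_opNorm (by rw [hV]; norm_num : (1:ℝ)/2 < ‖V‖)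
  have hz0 : z ≠ 0 := by
    rintro rfl
    simp only [map_zero, norm_zero] at hz2
    linarith
  have hzn : ‖z‖ ≠ 0 := norm_ne_zero_iff.2 hz0
  refine ⟨‖z‖⁻¹ • z, ?_, ?_⟩
  · rw [norm_smul, norm_inv, norm_norm, inv_mul_cancel₀ hzn]
  · have hVz : V z = ‖z‖ • V (‖z‖⁻¹ • z) := by
      rw [map_smul, smul_smul, mul_inv_cancel₀ hzn, one_smul]
    calc (1:ℝ)/2 < ‖V z‖ := hz2
      _ = ‖z‖ * ‖V (‖z‖⁻¹ • z)‖ := by rw [hVz, norm_smul, norm_norm]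
      _ ≤ 1 * ‖V (‖z‖⁻¹ • z)‖ := mul_le_mul_of_nonneg_right hz1.le (norm_nonneg _)
      _ = ‖V (‖z‖⁻¹ • z)‖ := one_mul _

set_option maxHeartbeats 1000000 in
lemma aux_key [Nontrivial E] [StrictConvexSpace ℝ F]
    (A : Subspace 𝕂 C(X, E))
    (T : C(X, E) → C(Y, F))
    (hnorm : ∀ a : ↥A, ‖T ↑a - T 0‖ = ‖(↑a : C(X,E))‖)
    (hadd : ∀ a b : ↥A, T ↑(a + b) - T 0 = (T ↑a - T 0) + (T ↑b - T 0))
    (hsmul : ∀ (r : ℝ) (a : ↥A), T ↑(r • a) - T 0 = r • (T ↑a - T 0))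
    (hsub : ∀ a b : ↥A, T ↑(a - b) - T 0 = (T ↑a - T 0) - (T ↑b - T 0))
    {x : X} (hsb : x ∈ strongBoundaryPoints (A : Set C(X, E))) :
    ∃ y : Y, ∃ V : E →L[ℝ] F, ‖V‖ = 1 ∧
      ∀ f ∈ A, T f y = T 0 y + V (f x) := by
  classical
  obtain ⟨u₀, hu₀⟩ := exists_norm_eq E zero_le_one
  set P : Set ↥A := {a | ‖(a : C(X,E))‖ = 1 ∧ (a : C(X,E)) x = u₀} with hP
  obtain ⟨g₀, hg₀A, hg₀n, hg₀x, -⟩ := hsb univ Filter.univ_mem 1 one_pos u₀ hu₀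
  have ha₀ : (⟨g₀, hg₀A⟩ : ↥A) ∈ P := ⟨hg₀n, hg₀x⟩
  haveI hY : Nonempty Y := by
    by_contra hne
    rw [not_nonempty_iff] at hne
    have h1 : ‖T g₀ - T 0‖ = 1 := by rw [hnorm ⟨g₀, hg₀A⟩]; exact hg₀n
    have h2 : (T g₀ - T 0 : C(Y,F)) = 0 := ContinuousMap.ext fun y => (hne.false y).elim
    rw [h2, norm_zero] at h1
    exact zero_ne_one h1
  -- `P` is closed under midpoints
  have hmid : ∀ a ∈ P, ∀ b ∈ P, (1/2 : ℝ) • (a + b) ∈ P := by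
    intro a ha b hb
    have hcoe : (((1/2 : ℝ) • (a + b) : ↥A) : C(X,E)) = (1/2 : ℝ) • ((a : C(X,E)) + b) := by
      push_cast; rfl
    have hval : (((1/2 : ℝ) • (a + b) : ↥A) : C(X,E)) x = u₀ := by
      rw [hcoe]
      simp only [ContinuousMap.smul_apply, ContinuousMap.add_apply, ha.2, hb.2]
      rw [← two_smul ℝ u₀, smul_smul]; norm_num
    refine ⟨le_antisymm ?_ ?_, hval⟩
    · rw [hcoe, norm_smul, Real.norm_eq_abs, abs_of_pos (by norm_num : (0:ℝ) < 1/2)]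
      have := norm_add_le (a : C(X,E)) (b : C(X,E))
      rw [ha.1, hb.1] at this
      linarith
    · have := ContinuousMap.norm_coe_le_norm (((1/2 : ℝ) • (a + b) : ↥A) : C(X,E)) x
      rw [hval, hu₀] at this
      exact this
  -- the compact sets where the image functions attain norm one
  set K : ↥A → Set Y := fun a => {y | ‖(T ↑a - T 0) y‖ = 1} with hK
  have hKcl : ∀ a : ↥A, IsClosed (K a) :=
    fun a => isClosed_eq (T ↑a - T 0).continuous.norm continuous_const
  have hKbnd : ∀ a ∈ P, ∀ y : Y, ‖(T ↑a - T 0) y‖ ≤ 1 := by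
    intro a ha y
    have := ContinuousMap.norm_coe_le_norm (T ↑a - T 0) y
    rwa [hnorm a, ha.1] at this
  have hKne : ∀ a ∈ P, (K a).Nonempty := by
    intro a ha
    obtain ⟨y, hy⟩ := aux_cm_exists_norm_eq (T ↑a - T 0)
    exact ⟨y, by rw [hK]; simp only [mem_setOf_eq]; rw [hy, hnorm a, ha.1]⟩
  -- the value of the midpoint function
  have hmidval : ∀ a b : ↥A, ∀ y : Y,
      (T ↑((1/2 : ℝ) • (a + b)) - T 0) y
        = (1/2 : ℝ) • ((T ↑a - T 0) y + (T ↑b - T 0) y) := by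
    intro a b y
    rw [hsmul, hadd]
    simp [ContinuousMap.smul_apply, ContinuousMap.add_apply]
  haveI : Nonempty ↥P := ⟨⟨⟨g₀, hg₀A⟩, ha₀⟩⟩
  have hKmem : ∀ (a : ↥A) (y : Y), y ∈ K a ↔ ‖(T ↑a - T 0) y‖ = 1 := fun a y => Iff.rfl
  have hdir : Directed (· ⊇ ·) (fun p : ↥P => K ↑p) := by
    intro p q
    have hc : ((1/2 : ℝ) • ((p : ↥A) + (q : ↥A)) : ↥A) ∈ P := hmid _ p.2 _ q.2
    refine ⟨⟨(1/2 : ℝ) • ((p : ↥A) + (q : ↥A)), hc⟩, ?_, ?_⟩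
    · intro y hy
      rw [hKmem] at hy ⊢
      have h1 : ‖(1/2 : ℝ) • ((T ↑(p : ↥A) - T 0) y + (T ↑(q : ↥A) - T 0) y)‖ = 1 := by
        rw [← hmidval]; exact hy
      have h2 := aux_midpt (hKbnd _ p.2 y) (hKbnd _ q.2 y) h1
      exact h2.2
    · intro y hy
      rw [hKmem] at hy ⊢
      have h1 : ‖(1/2 : ℝ) • ((T ↑(p : ↥A) - T 0) y + (T ↑(q : ↥A) - T 0) y)‖ = 1 := by
        rw [← hmidval]; exact hy
      have h2 := aux_midpt (hKbnd _ p.2 y) (hKbnd _ q.2 y) h1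
      rw [← h2.1]
      exact h2.2
  obtain ⟨y₀, hy₀⟩ := IsCompact.nonempty_iInter_of_directed_nonempty_isCompact_isClosed
    (fun p : ↥P => K ↑p) hdir (fun p => hKne ↑p p.2)
    (fun p => (hKcl ↑p).isCompact) (fun p => hKcl ↑p)
  have hKy : ∀ a ∈ P, ‖(T ↑a - T 0) y₀‖ = 1 := fun a ha => mem_iInter.1 hy₀ ⟨a, ha⟩
  -- all functions in `P` take the same value at `y₀`
  have hcomm : ∀ a ∈ P, ∀ b ∈ P, (T ↑a - T 0) y₀ = (T ↑b - T 0) y₀ := by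
    intro a ha b hb
    have h1 : ‖(1/2 : ℝ) • ((T ↑a - T 0) y₀ + (T ↑b - T 0) y₀)‖ = 1 := by
      rw [← hmidval]; exact hKy _ (hmid a ha b hb)
    exact (aux_midpt (hKbnd _ ha y₀) (hKbnd _ hb y₀) h1).1
  set v₀ : F := (T g₀ - T 0) y₀ with hv₀def
  have hv₀ : ‖v₀‖ = 1 := hKy ⟨g₀, hg₀A⟩ ha₀
  -- ## locality: functions vanishing at x are sent to functions vanishing at y₀
  have hloc1 : ∀ f : ↥A, (↑f : C(X,E)) x = 0 → ‖(↑f : C(X,E))‖ ≤ 1 →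
      ∀ δ : ℝ, 0 < δ → ‖v₀ + (T ↑f - T 0) y₀‖ ≤ 1 + δ := by
    intro f hfx hfn δ hδ
    set U : Set X := {z | ‖(↑f : C(X,E)) z‖ < δ} with hU
    have hUopen : IsOpen U := isOpen_lt (↑f : C(X,E)).continuous.norm continuous_const
    have hUx : x ∈ U := by simp [hU, hfx, hδ]
    obtain ⟨g, hgA, hgn, hgx, hgsm⟩ := hsb U (hUopen.mem_nhds hUx) δ hδ u₀ hu₀
    have hgP : (⟨g, hgA⟩ : ↥A) ∈ P := ⟨hgn, hgx⟩
    have hbnd : ‖g + (↑f : C(X,E))‖ ≤ 1 + δ := by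
      refine (ContinuousMap.norm_le _ (by linarith)).mpr fun z => ?_
      by_cases hz : z ∈ U
      · have h1 : ‖g z‖ ≤ 1 := by
          have := ContinuousMap.norm_coe_le_norm g z; rwa [hgn] at this
        have h2 : ‖(↑f : C(X,E)) z‖ < δ := hz
        calc ‖(g + (↑f : C(X,E))) z‖ = ‖g z + (↑f : C(X,E)) z‖ := by
              rw [ContinuousMap.add_apply]
          _ ≤ ‖g z‖ + ‖(↑f : C(X,E)) z‖ := norm_add_le _ _
          _ ≤ 1 + δ := by linarith
      · have h1 : ‖g z‖ < δ := hgsm z hz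
        have h2 : ‖(↑f : C(X,E)) z‖ ≤ 1 := by
          have := ContinuousMap.norm_coe_le_norm (↑f : C(X,E)) z; linarith
        calc ‖(g + (↑f : C(X,E))) z‖ = ‖g z + (↑f : C(X,E)) z‖ := by
              rw [ContinuousMap.add_apply]
          _ ≤ ‖g z‖ + ‖(↑f : C(X,E)) z‖ := norm_add_le _ _
          _ ≤ 1 + δ := by linarith
    have hval : v₀ + (T ↑f - T 0) y₀ = (T ↑((⟨g, hgA⟩ : ↥A) + f) - T 0) y₀ := by
      rw [hadd, ContinuousMap.add_apply]
      congr 1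
      exact (hcomm ⟨g, hgA⟩ hgP ⟨g₀, hg₀A⟩ ha₀).symm
    rw [hval]
    calc ‖(T ↑((⟨g, hgA⟩ : ↥A) + f) - T 0) y₀‖
        ≤ ‖T ↑((⟨g, hgA⟩ : ↥A) + f) - T 0‖ := ContinuousMap.norm_coe_le_norm _ _
      _ = ‖(↑((⟨g, hgA⟩ : ↥A) + f) : C(X,E))‖ := hnorm _
      _ = ‖g + (↑f : C(X,E))‖ := rfl
      _ ≤ 1 + δ := hbnd
  have hloc2 : ∀ f : ↥A, (↑f : C(X,E)) x = 0 → ‖(↑f : C(X,E))‖ ≤ 1 →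
      (T ↑f - T 0) y₀ = 0 := by
    intro f hfx hfn
    set w : F := (T ↑f - T 0) y₀ with hw
    have hplus : ‖v₀ + w‖ ≤ 1 := aux_le_one (hloc1 f hfx hfn)
    have hnegf : ((-f : ↥A) : C(X,E)) = -(↑f : C(X,E)) := rfl
    have hminus : ‖v₀ - w‖ ≤ 1 := by
      have h1 := hloc1 (-f) (by rw [hnegf, ContinuousMap.neg_apply, hfx, neg_zero])
        (by rw [hnegf, norm_neg]; exact hfn)
      have h2 : (T ↑(-f) - T 0) y₀ = -w := by
        have h3 : (-f : ↥A) = (-1 : ℝ) • f := by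
          ext1; rw [hnegf]; push_cast; rw [neg_one_smul]
        rw [h3, hsmul, ContinuousMap.smul_apply, hw, neg_one_smul]
      rw [h2] at h1
      rw [sub_eq_add_neg]
      exact aux_le_one h1
    have hmv : (1/2 : ℝ) • ((v₀ + w) + (v₀ - w)) = v₀ := by
      have : (v₀ + w) + (v₀ - w) = (2 : ℝ) • v₀ := by
        rw [two_smul]; abel
      rw [this, smul_smul]; norm_num
    have heq := aux_midpt hplus hminus (by rw [hmv]; exact hv₀)
    have h4 : v₀ + w = v₀ + -w := by rw [← sub_eq_add_neg]; exact heq.1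
    have h5 : w = -w := add_left_cancel h4
    have h6 : (2 : ℝ) • w = 0 := by
      rw [two_smul]
      nth_rewrite 2 [h5]
      exact add_neg_cancel w
    have := smul_eq_zero.mp h6
    rcases this with h | h
    · norm_num at h
    · exact h
  have hloc : ∀ f : ↥A, (↑f : C(X,E)) x = 0 → (T ↑f - T 0) y₀ = 0 := by
    intro f hfx
    rcases eq_or_ne f 0 with rfl | hne
    · have : ((0 : ↥A) : C(X,E)) = 0 := rfl
      rw [this]
      rw [sub_self]
      rfl
    · have hc : (0:ℝ) < ‖(↑f : C(X,E))‖ := by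
        rw [norm_pos_iff]
        intro h
        exact hne (Subtype.ext h)
      set c : ℝ := ‖(↑f : C(X,E))‖ with hcdef
      have hcoe : ((c⁻¹ • f : ↥A) : C(X,E)) = c⁻¹ • (↑f : C(X,E)) := by push_cast; rfl
      have h1 : ((c⁻¹ • f : ↥A) : C(X,E)) x = 0 := by
        rw [hcoe, ContinuousMap.smul_apply, hfx, smul_zero]
      have h2 : ‖((c⁻¹ • f : ↥A) : C(X,E))‖ ≤ 1 := by
        rw [hcoe, norm_smul, norm_inv, Real.norm_eq_abs, abs_of_pos hc, ← hcdef,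
          inv_mul_cancel₀ hc.ne']
      have h3 := hloc2 (c⁻¹ • f) h1 h2
      have h4 : f = c • (c⁻¹ • f : ↥A) := by
        rw [smul_smul, mul_inv_cancel₀ hc.ne', one_smul]
      rw [h4, hsmul, ContinuousMap.smul_apply, h3, smul_zero]
  -- functions agreeing at x agree at y₀
  have hdiff : ∀ a b : ↥A, (↑a : C(X,E)) x = (↑b : C(X,E)) x →
      (T ↑a - T 0) y₀ = (T ↑b - T 0) y₀ := by
    intro a b hab
    have hcoe : ((a - b : ↥A) : C(X,E)) = (↑a : C(X,E)) - ↑b := rfl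
    have h1 : ((a - b : ↥A) : C(X,E)) x = 0 := by
      rw [hcoe, ContinuousMap.sub_apply, hab, sub_self]
    have h2 := hloc (a - b) h1
    rw [hsub, ContinuousMap.sub_apply] at h2
    exact sub_eq_zero.mp h2
  -- selection of norm-controlled functions with prescribed value at x
  have hsel : ∀ e : E, ∃ a : ↥A, (↑a : C(X,E)) x = e ∧ ‖(↑a : C(X,E))‖ ≤ ‖e‖ := by
    intro e
    rcases eq_or_ne e 0 with rfl | he
    · exact ⟨0, by simp [Submodule.coe_zero], by simp [Submodule.coe_zero]⟩
    · have hne : ‖e‖ ≠ 0 := norm_ne_zero_iff.2 he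
      obtain ⟨f, hfA, hfn, hfx, -⟩ := hsb univ Filter.univ_mem 1 one_pos (‖e‖⁻¹ • e)
        (by rw [norm_smul, norm_inv, norm_norm, inv_mul_cancel₀ hne])
      refine ⟨(‖e‖ : ℝ) • ⟨f, hfA⟩, ?_, ?_⟩
      · have hcoe : (((‖e‖ : ℝ) • (⟨f, hfA⟩ : ↥A) : ↥A) : C(X,E)) = (‖e‖ : ℝ) • f := by
          push_cast; rfl
        rw [hcoe, ContinuousMap.smul_apply, hfx, smul_smul, mul_inv_cancel₀ hne, one_smul]
      · have hcoe : (((‖e‖ : ℝ) • (⟨f, hfA⟩ : ↥A) : ↥A) : C(X,E)) = (‖e‖ : ℝ) • f := by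
          push_cast; rfl
        rw [hcoe, norm_smul, norm_norm, hfn, mul_one]
  choose sel hselx hseln using hsel
  -- definition of the operator V
  set q : E → F := fun e => (T ↑(sel e) - T 0) y₀ with hq
  have hqadd : ∀ e₁ e₂ : E, q (e₁ + e₂) = q e₁ + q e₂ := by
    intro e₁ e₂
    have h1 : (↑(sel (e₁ + e₂)) : C(X,E)) x = (↑(sel e₁ + sel e₂) : C(X,E)) x := by
      have hcoe : (↑(sel e₁ + sel e₂) : C(X,E)) = (↑(sel e₁) : C(X,E)) + ↑(sel e₂) := rfl
      rw [hselx, hcoe, ContinuousMap.add_apply, hselx, hselx]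
    have h2 := hdiff _ _ h1
    rw [hq]
    simp only []
    rw [h2, hadd, ContinuousMap.add_apply]
  have hqsmul : ∀ (r : ℝ) (e : E), q (r • e) = r • q e := by
    intro r e
    have h1 : (↑(sel (r • e)) : C(X,E)) x = (↑(r • sel e) : C(X,E)) x := by
      have hcoe : (↑(r • sel e) : C(X,E)) = r • (↑(sel e) : C(X,E)) := by push_cast; rfl
      rw [hselx, hcoe, ContinuousMap.smul_apply, hselx]
    have h2 := hdiff _ _ h1
    rw [hq]
    simp only []
    rw [h2, hsmul, ContinuousMap.smul_apply]
  have hqbound : ∀ e : E, ‖q e‖ ≤ 1 * ‖e‖ := by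
    intro e
    rw [one_mul]
    calc ‖q e‖ ≤ ‖T ↑(sel e) - T 0‖ := ContinuousMap.norm_coe_le_norm _ _
      _ = ‖(↑(sel e) : C(X,E))‖ := hnorm _
      _ ≤ ‖e‖ := hseln e
  set Vlin : E →ₗ[ℝ] F :=
    { toFun := q, map_add' := hqadd, map_smul' := hqsmul } with hVlin
  set V : E →L[ℝ] F := Vlin.mkContinuous 1 hqbound with hV
  have hVapp : ∀ e : E, V e = q e := fun e => rfl
  have hVu₀ : V u₀ = v₀ := by
    rw [hVapp]
    have h1 := hdiff (sel u₀) ⟨g₀, hg₀A⟩ (by rw [hselx]; exact hg₀x.symm)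
    rw [hq]
    simp only []
    rw [h1]
  have hVnorm : ‖V‖ = 1 := by
    refine le_antisymm (Vlin.mkContinuous_norm_le zero_le_one hqbound) ?_
    have h1 : ‖V u₀‖ ≤ ‖V‖ * ‖u₀‖ := V.le_opNorm u₀
    rw [hVu₀, hv₀, hu₀, mul_one] at h1
    exact h1
  refine ⟨y₀, V, hVnorm, ?_⟩
  intro f hf
  have h1 := hdiff ⟨f, hf⟩ (sel (f x)) (by rw [hselx])
  have h2 : (T f - T 0) y₀ = V (f x) := by rw [hVapp]; exact h1
  rw [ContinuousMap.sub_apply] at h2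
  rw [← h2]
  abel

set_option maxHeartbeats 1000000 in
/-- If `F` is strictly convex and `Ch(A) ⊆ Θ(A)`, then any surjective isometry
`T : A → B` is represented on a subset `Z ⊆ Y` by a continuous surjection
`φ : Z → Ch(A)` and norm-one real-linear operators `V_y : E → F`. -/
theorem stmt15 [Nontrivial E] [StrictConvexSpace ℝ F]
    (A : Subspace 𝕂 C(X, E)) (B : Subspace 𝕂 C(Y, F))
    (hCh : choquetBoundary A ⊆ strongBoundaryPoints (A : Set C(X, E)))
    (T : C(X, E) → C(Y, F))
    (hmap : ∀ f ∈ A, T f ∈ B)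
    (hsurj : ∀ g ∈ B, ∃ f ∈ A, T f = g)
    (hiso : ∀ f ∈ A, ∀ g ∈ A, ‖T f - T g‖ = ‖f - g‖) :
    ∃ (Z : Set Y) (φ : Z → X) (V : Z → (E →L[ℝ] F)),
      Continuous φ ∧
      (∀ y : Z, φ y ∈ choquetBoundary A) ∧
      (∀ x ∈ choquetBoundary A, ∃ y : Z, φ y = x) ∧
      (∀ y : Z, ‖V y‖ = 1) ∧
      (∀ f ∈ A, ∀ y : Z, T f (y : Y) = T 0 (y : Y) + V y (f (φ y))) := by
  classical
  -- ## Step 1: Mazur–Ulam. `a ↦ T a - T 0` is a real-linear isometry from `A` onto `B`.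
  set tmap : ↥A → ↥B := fun a => ⟨T ↑a - T 0, B.sub_mem (hmap _ a.2) (hmap 0 A.zero_mem)⟩
    with htmap
  have hinj : Function.Injective tmap := by
    intro a b h
    have h1 : T ↑a - T 0 = T ↑b - T 0 := congrArg Subtype.val h
    have h2 : T ↑a = T ↑b := sub_left_injective h1
    have h3 : ‖(↑a - ↑b : C(X,E))‖ = 0 := by
      rw [← hiso ↑a a.2 ↑b b.2, h2, sub_self, norm_zero]
    exact Subtype.ext (by rwa [norm_eq_zero, sub_eq_zero] at h3)
  have hsurj' : Function.Surjective tmap := by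
    intro b
    obtain ⟨f, hf, hTf⟩ := hsurj (↑b + T 0) (B.add_mem b.2 (hmap 0 A.zero_mem))
    exact ⟨⟨f, hf⟩, Subtype.ext (by simp [htmap, hTf])⟩
  have his : Isometry tmap := by
    apply Isometry.of_dist_eq
    intro a b
    have h1 : dist (tmap a) (tmap b) = ‖(T ↑a - T 0) - (T ↑b - T 0)‖ := by
      rw [Subtype.dist_eq, dist_eq_norm]
    rw [h1, sub_sub_sub_cancel_right, hiso ↑a a.2 ↑b b.2, Subtype.dist_eq, dist_eq_norm]
  let Te : ↥A ≃ᵢ ↥B := ⟨Equiv.ofBijective tmap ⟨hinj, hsurj'⟩, his⟩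
  have h0 : Te 0 = 0 := Subtype.ext (by
    show T ((0 : ↥A) : C(X, E)) - T 0 = ((0 : ↥B) : C(Y, F))
    simp)
  let S : ↥A ≃ₗᵢ[ℝ] ↥B := Te.toRealLinearIsometryEquivOfMapZero h0
  have hScoe : ∀ a : ↥A, ((S a : ↥B) : C(Y,F)) = T ↑a - T 0 := fun a => rfl
  have hnorm : ∀ a : ↥A, ‖T ↑a - T 0‖ = ‖(↑a : C(X,E))‖ := by
    intro a
    rw [← hScoe]
    show ‖S a‖ = _
    rw [S.norm_map]; rfl
  have hadd : ∀ a b : ↥A, T ↑(a + b) - T 0 = (T ↑a - T 0) + (T ↑b - T 0) := by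
    intro a b
    rw [← hScoe, ← hScoe, ← hScoe, map_add]; rfl
  have hsmul : ∀ (r : ℝ) (a : ↥A), T ↑(r • a) - T 0 = r • (T ↑a - T 0) := by
    intro r a
    rw [← hScoe, ← hScoe, map_smul]; rfl
  have hsub : ∀ a b : ↥A, T ↑(a - b) - T 0 = (T ↑a - T 0) - (T ↑b - T 0) := by
    intro a b
    rw [← hScoe, ← hScoe, ← hScoe, map_sub]; rfl
  -- ## Step 2: pointwise representation at each Choquet boundary point.
  have key : ∀ x ∈ choquetBoundary A, ∃ y : Y, ∃ V : E →L[ℝ] F, ‖V‖ = 1 ∧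
      ∀ f ∈ A, T f y = T 0 y + V (f x) := fun x hx =>
    aux_key A T hnorm hadd hsmul hsub (hCh hx)
  -- ## Step 3: global assembly
  set Z : Set Y := {y : Y | ∃ x, x ∈ choquetBoundary A ∧ ∃ V : E →L[ℝ] F, ‖V‖ = 1 ∧
    ∀ f ∈ A, T f y = T 0 y + V (f x)} with hZ
  have hZdata : ∀ y : ↥Z, ∃ x, x ∈ choquetBoundary A ∧ ∃ V : E →L[ℝ] F, ‖V‖ = 1 ∧
      ∀ f ∈ A, T f ↑y = T 0 ↑y + V (f x) := fun y => y.2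
  choose φ hφCh V hVn hrep using hZdata
  have huniq : ∀ y : Y, ∀ x₁ x₂ : X, ∀ V₁ V₂ : E →L[ℝ] F, x₁ ∈ choquetBoundary A →
      x₂ ∈ choquetBoundary A → ‖V₁‖ = 1 → (∀ f ∈ A, T f y = T 0 y + V₁ (f x₁)) →
      ‖V₂‖ = 1 → (∀ f ∈ A, T f y = T 0 y + V₂ (f x₂)) → x₁ = x₂ := by
    intro y x₁ x₂ V₁ V₂ hx₁ hx₂ hV₁ hr₁ hV₂ hr₂
    by_contra hne
    obtain ⟨u, hu1, hu2⟩ := aux_exists_unit_big V₁ hV₁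
    obtain ⟨g, hgA, hgn, hgx, hgs⟩ := hCh hx₁ {x₂}ᶜ
      (compl_singleton_mem_nhds hne) (1/2) (by norm_num) u hu1
    have h1 : V₁ (g x₁) = V₂ (g x₂) := by
      have e1 := hr₁ g hgA
      have e2 := hr₂ g hgA
      rw [e1] at e2
      exact add_left_cancel e2
    have h2 : ‖g x₂‖ < 1/2 := hgs x₂ (by simp)
    have h3 : ‖V₂ (g x₂)‖ ≤ ‖g x₂‖ := by
      have := V₂.le_opNorm (g x₂)
      rwa [hV₂, one_mul] at this
    rw [hgx] at h1
    rw [h1] at hu2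
    linarith
  refine ⟨Z, φ, V, ?_, hφCh, ?_, hVn, fun f hf y => hrep y f hf⟩
  · -- continuity of φ
    rw [continuous_iff_continuousAt]
    intro y
    refine Filter.tendsto_def.mpr fun W hW => ?_
    obtain ⟨u, hu1, hu2⟩ := aux_exists_unit_big (V y) (hVn y)
    obtain ⟨g, hgA, hgn, hgx, hgs⟩ := hCh (hφCh y) W hW (1/2) (by norm_num) u hu1
    set O : Set Y := {y' : Y | 1/2 < ‖(T g - T 0) y'‖} with hO
    have hOopen : IsOpen O := isOpen_lt continuous_const (T g - T 0).continuous.norm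
    have hyO : ↑y ∈ O := by
      show (1:ℝ)/2 < ‖(T g - T 0) ↑y‖
      rw [ContinuousMap.sub_apply, hrep y g hgA, add_sub_cancel_left, hgx]
      exact hu2
    have hsubset : (Subtype.val : ↥Z → Y) ⁻¹' O ⊆ φ ⁻¹' W := by
      intro y' hy'
      by_contra hnW
      have h2 : ‖g (φ y')‖ < 1/2 := hgs _ hnW
      have h4 : ‖(T g - T 0) ↑y'‖ ≤ ‖g (φ y')‖ := by
        rw [ContinuousMap.sub_apply, hrep y' g hgA, add_sub_cancel_left]
        have := (V y').le_opNorm (g (φ y'))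
        rwa [hVn y', one_mul] at this
      have h5 : (1:ℝ)/2 < ‖(T g - T 0) ↑y'‖ := hy'
      linarith
    exact Filter.mem_of_superset
      ((hOopen.preimage continuous_subtype_val).mem_nhds hyO) hsubset
  · -- surjectivity onto the Choquet boundary
    intro x hx
    obtain ⟨y, Vx, hVx, hrepx⟩ := key x hx
    have hyZ : y ∈ Z := ⟨x, hx, Vx, hVx, hrepx⟩
    refine ⟨⟨y, hyZ⟩, ?_⟩
    exact huniq y (φ ⟨y, hyZ⟩) x (V ⟨y, hyZ⟩) Vx (hφCh ⟨y, hyZ⟩) hx (hVn ⟨y, hyZ⟩)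
      (hrep ⟨y, hyZ⟩) hVx hrepx
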